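/- In the balanced parentheses sequence B of a rooted ordered tree, vertex v (identified by its preorder rank, excluding the root handled separately) satisfies: the position select_0(v-1) in B is the opening parenthesis of the edge from v's parent to v, and the subtree of v corresponds exactly to the interval [select_0(v-1), match(select_0(v-1))]. -/

import Mathlib

/-- A balanced parentheses sequence over `Bool`, where `false` is an opening
parenthesis (`0`) and `true` a closing parenthesis (`1`): every prefix has at
least as many openings as closings, and the totals are equal. -/
def BalancedSeq (s : List Bool) : Prop :=
  (∀ k, (s.take k).count true ≤ (s.take k).count false) ∧
    s.count false = s.count true

/-- Rooted ordered trees: a root together with an ordered list of subtrees. -/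
inductive OTree : Type where
  | node : List OTree → OTree

/-- Number of vertices of a rooted ordered tree. -/
def OTree.size : OTree → ℕ
  | .node cs => 1 + (cs.attach.map (fun c => OTree.size c.1)).sum
decreasing_by
  have := List.sizeOf_lt_of_mem c.2
  simp only [OTree.node.sizeOf_spec]
  omega

/-- The balanced-parentheses sequence of a rooted ordered tree obtained by a
depth-first traversal: a `false` (`0`, open) the first time an edge is
traversed toward a child and a `true` (`1`, close) when it is traversed back. -/
def OTree.bp : OTree → List Bool
  | .node cs => (cs.attach.map (fun c => false :: (OTree.bp c.1 ++ [true]))).flatten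
decreasing_by
  have := List.sizeOf_lt_of_mem c.2
  simp only [OTree.node.sizeOf_spec]
  omega

/-- Preorder list of the subtrees rooted at each vertex (the `i`-th entry is
the subtree of the `(i+1)`-st vertex in preorder, `0`-indexed). -/
def OTree.preorderList : OTree → List OTree
  | .node cs =>
      .node cs :: (cs.attach.map (fun c => OTree.preorderList c.1)).flatten
decreasing_by
  have := List.sizeOf_lt_of_mem c.2
  simp only [OTree.node.sizeOf_spec]
  omega

/-- Excess of openings over closings in the length-`k` prefix. -/
def parenDepth (s : List Bool) (k : ℕ) : ℤ :=
  ((s.take k).count false : ℤ) - ((s.take k).count true : ℤ)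

/-- `i` is an opening parenthesis matched with the closing parenthesis `j`. -/
def MatchedPair (s : List Bool) (i j : ℕ) : Prop :=
  i < j ∧ j < s.length ∧ s[i]? = some false ∧ s[j]? = some true ∧
    parenDepth s (j + 1) = parenDepth s i ∧
    ∀ k, i < k → k ≤ j → parenDepth s i < parenDepth s k


theorem OTree.myind {P : OTree → Prop}
    (h : ∀ cs : List OTree, (∀ c ∈ cs, P c) → P (.node cs)) : ∀ t, P t
  | .node cs => h cs (fun c _ => OTree.myind h c)
decreasing_by
  have := List.sizeOf_lt_of_mem (by assumption : c ∈ cs)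
  simp only [OTree.node.sizeOf_spec]; omega

def bpL (cs : List OTree) : List Bool := (cs.map (fun c => false :: (c.bp ++ [true]))).flatten
def poL (cs : List OTree) : List OTree := (cs.map OTree.preorderList).flatten

theorem size_node (cs : List OTree) : (OTree.node cs).size = 1 + (cs.map OTree.size).sum := by
  rw [OTree.size]; congr 1; rw [← List.attach_map_val (l := cs) (f := OTree.size)]

theorem bp_node (cs : List OTree) : (OTree.node cs).bp = bpL cs := by
  rw [OTree.bp, bpL]; congr 1
  rw [← List.attach_map_val (l := cs) (f := fun c => false :: (OTree.bp c ++ [true]))]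

theorem po_node (cs : List OTree) :
    (OTree.node cs).preorderList = OTree.node cs :: poL cs := by
  rw [OTree.preorderList, poL]; congr 1
  rw [← List.attach_map_val (l := cs) (f := OTree.preorderList)]

theorem bpL_cons (c : OTree) (cs : List OTree) :
    bpL (c :: cs) = (false :: (c.bp ++ [true])) ++ bpL cs := by
  simp [bpL]

theorem poL_cons (c : OTree) (cs : List OTree) :
    poL (c :: cs) = c.preorderList ++ poL cs := by
  simp [poL]

theorem size_pos (t : OTree) : 1 ≤ t.size := by
  obtain ⟨cs⟩ := t; rw [size_node]; omega

theorem po_length (t : OTree) : t.preorderList.length = t.size := by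
  induction t using OTree.myind with
  | h cs ih =>
    rw [po_node, size_node]
    induction cs with
    | nil => simp [poL]
    | cons c rest ihr =>
      have h1 := ih c (by simp)
      have h2 := ihr (fun c hc => ih c (by simp [hc]))
      simp only [poL_cons, List.length_cons, List.length_append, List.map_cons, List.sum_cons] at *
      omega

theorem po_head (t : OTree) : t.preorderList[0]? = some t := by
  obtain ⟨cs⟩ := t; rw [po_node]; simp

theorem bp_count_length (t : OTree) :
    t.bp.count false + 1 = t.size ∧ t.bp.count true + 1 = t.size ∧
      t.bp.length + 2 = 2 * t.size := by
  induction t using OTree.myind with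
  | h cs ih =>
    rw [bp_node, size_node]
    induction cs with
    | nil => simp [bpL]
    | cons c rest ihr =>
      have h1 := ih c (by simp)
      have h2 := ihr (fun c hc => ih c (by simp [hc]))
      simp only [bpL_cons, List.count_append, List.length_append, List.count_cons,
        List.length_cons, List.map_cons, List.sum_cons, List.length_append,
        List.count_append, List.count_singleton, List.length_singleton] at *
      simp_all
      omega

theorem bal_append {u w : List Bool} (hu : BalancedSeq u) (hw : BalancedSeq w) :
    BalancedSeq (u ++ w) := by
  obtain ⟨hu1, hu2⟩ := hu
  obtain ⟨hw1, hw2⟩ := hw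
  constructor
  · intro k
    rcases le_or_gt k u.length with h | h
    · rw [List.take_append_of_le_length h]; exact hu1 k
    · rw [List.take_append, List.take_of_length_le (le_of_lt h)]
      simp only [List.count_append]
      have := hw1 (k - u.length)
      omega
  · simp [List.count_append, hu2, hw2]

theorem bal_wrap {u : List Bool} (hu : BalancedSeq u) :
    BalancedSeq (false :: (u ++ [true])) := by
  obtain ⟨hu1, hu2⟩ := hu
  constructor
  · intro k
    cases k with
    | zero => simp
    | succ k =>
      rw [List.take_succ_cons]
      simp only [List.count_cons]
      rcases le_or_gt k u.length with h | h
      · rw [List.take_append_of_le_length h]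
        have := hu1 k
        simp only [beq_self_eq_true, if_pos, beq_iff_eq, Bool.false_eq_true, if_neg,
          not_false_eq_true, reduceIte]
        omega
      · rw [List.take_append, List.take_of_length_le (le_of_lt h)]
        have h2 : (List.take (k - u.length) [true]).count true ≤ 1 := by
          calc _ ≤ (List.take (k - u.length) [true]).length := List.count_le_length
            _ ≤ _ := by simp
        simp only [List.count_append, beq_self_eq_true, if_pos, beq_iff_eq,
          Bool.false_eq_true, if_neg, not_false_eq_true, reduceIte]
        omega
  · simp [List.count_append, hu2]

theorem bp_balanced (t : OTree) : BalancedSeq t.bp := by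
  induction t using OTree.myind with
  | h cs ih =>
    rw [bp_node]
    induction cs with
    | nil => exact ⟨by simp [bpL], by simp [bpL]⟩
    | cons c rest ihr =>
      rw [bpL_cons]
      exact bal_append (bal_wrap (ih c (by simp))) (ihr (fun c hc => ih c (by simp [hc])))

def SUB (t : OTree) : Prop :=
  ∀ k, k + 1 < t.size → ∃ p s,
    t.preorderList[k+1]? = some s ∧
    (t.bp.take p).count false = k ∧
    t.bp[p]? = some false ∧
    p + 2 * s.size ≤ t.bp.length ∧
    (t.bp.drop p).take (2 * s.size) = false :: (s.bp ++ [true])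

theorem subl (cs : List OTree) (h : ∀ c ∈ cs, SUB c) :
    ∀ k, k < (cs.map OTree.size).sum → ∃ p s,
      (poL cs)[k]? = some s ∧
      ((bpL cs).take p).count false = k ∧
      (bpL cs)[p]? = some false ∧
      p + 2 * s.size ≤ (bpL cs).length ∧
      ((bpL cs).drop p).take (2 * s.size) = false :: (s.bp ++ [true]) := by
  induction cs with
  | nil => intro k hk; simp at hk
  | cons c rest ihr =>
    intro k hk
    simp only [List.map_cons, List.sum_cons] at hk
    obtain ⟨hc1, hc2, hc3⟩ := bp_count_length c
    have hsz1 := size_pos c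
    have hAlen : (false :: (c.bp ++ [true])).length = 2 * c.size := by simp; omega
    rw [bpL_cons, poL_cons]
    rcases lt_or_ge k c.size with hkc | hkc
    · rcases Nat.eq_zero_or_pos k with rfl | hk1
      · -- k = 0 : the vertex is c itself
        refine ⟨0, c, ?_, ?_, ?_, ?_, ?_⟩
        · rw [List.getElem?_append_left (by rw [po_length]; omega), po_head]
        · simp
        · rw [List.getElem?_append_left (by simp)]; simp
        · simp only [List.length_append, zero_add]; omega
        · rw [List.drop_zero, List.take_append_of_le_length (by omega),
            List.take_of_length_le (by omega)]
      · -- 0 < k < size c : recurse into c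
        obtain ⟨p', s, hpo, hcnt, hget, hbd, hseg⟩ :=
          h c (by simp) (k - 1) (by omega)
        have hplt : p' < c.bp.length := by
          by_contra hcon
          rw [List.getElem?_eq_none_iff.mpr (by omega)] at hget
          simp at hget
        have hss1 := size_pos s
        refine ⟨p' + 1, s, ?_, ?_, ?_, ?_, ?_⟩
        · rw [List.getElem?_append_left (by rw [po_length]; omega)]
          have : k = (k - 1) + 1 := by omega
          rw [this]; exact hpo
        · rw [List.take_append_of_le_length (by simp; omega),
            List.take_succ_cons, List.take_append_of_le_length (by omega)]
          simp [hcnt]; omega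
        · rw [List.getElem?_append_left (by simp; omega),
            List.getElem?_cons_succ, List.getElem?_append_left (by omega)]
          exact hget
        · simp only [List.length_append]; omega
        · rw [List.drop_append_of_le_length (by simp; omega)]
          have hd : (false :: (c.bp ++ [true])).drop (p' + 1) = c.bp.drop p' ++ [true] := by
            rw [List.drop_succ_cons, List.drop_append_of_le_length (by omega)]
          rw [hd, List.take_append_of_le_length (by simp; omega),
            List.take_append_of_le_length (by simp; omega)]
          exact hseg
    · -- k ≥ size c : recurse into rest
      obtain ⟨p'', s, hpo, hcnt, hget, hbd, hseg⟩ :=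
        ihr (fun c hc => h c (by simp [hc])) (k - c.size) (by omega)
      refine ⟨(false :: (c.bp ++ [true])).length + p'', s, ?_, ?_, ?_, ?_, ?_⟩
      · rw [List.getElem?_append_right (by rw [po_length]; omega), po_length]
        exact hpo
      · rw [List.take_length_add_append, List.count_append, hcnt]
        simp; omega
      · rw [List.getElem?_append_right (by omega)]
        simpa using hget
      · simp only [List.length_append]; omega
      · rw [List.drop_length_add_append]
        exact hseg

theorem sub_all (t : OTree) : SUB t := by
  induction t using OTree.myind with
  | h cs ih =>
    intro k hk
    rw [size_node] at hk
    obtain ⟨p, s, hpo, hcnt, hget, hbd, hseg⟩ := subl cs ih k (by omega)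
    exact ⟨p, s, by rw [po_node, List.getElem?_cons_succ]; exact hpo,
      by rw [bp_node]; exact hcnt, by rw [bp_node]; exact hget,
      by rw [bp_node]; exact hbd, by rw [bp_node]; exact hseg⟩

theorem pos_lt_absurd {x : List Bool} {p q k : ℕ} (hpq : p < q)
    (hp : (x.take p).count false = k) (hp2 : x[p]? = some false)
    (hq : (x.take q).count false = k) : False := by
  have h1 : (x.take (p + 1)).count false = k + 1 := by
    rw [List.take_succ, hp2, List.count_append, hp]
    simp
  have h2 : x.take (p + 1) = (x.take q).take (p + 1) := by
    rw [List.take_take, min_eq_left (by omega)]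
  have h3 : ((x.take q).take (p+1)).count false ≤ (x.take q).count false :=
    (List.take_sublist _ _).count_le false
  rw [← h2, h1, hq] at h3
  omega

theorem pos_unique {x : List Bool} {p q k : ℕ}
    (hp : (x.take p).count false = k) (hp2 : x[p]? = some false)
    (hq : (x.take q).count false = k) (hq2 : x[q]? = some false) : p = q := by
  rcases lt_trichotomy p q with h | h | h
  · exact absurd (pos_lt_absurd h hp hp2 hq) not_false
  · exact h
  · exact absurd (pos_lt_absurd h hq hq2 hp) not_false

theorem pd_add (x : List Bool) (p m : ℕ) :
    parenDepth x (p + m) = parenDepth x p + parenDepth (x.drop p) m := by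
  unfold parenDepth
  rw [List.take_add, List.count_append, List.count_append]
  push_cast; ring

theorem pd_take {x : List Bool} {m L : ℕ} (h : m ≤ L) :
    parenDepth (x.take L) m = parenDepth x m := by
  unfold parenDepth
  rw [List.take_take, min_eq_left h]


/-- In the balanced-parentheses sequence `B` of a rooted ordered tree, the
position `select_0(v-1)` (here: the 0-indexed position `p` of the `(v-1)`-th
`0`) is the opening parenthesis of the edge from `v`'s parent into the `v`-th
preorder vertex (`v ≥ 2`, the root being handled separately), and the subtree
of `v` corresponds exactly to the interval `[p, match(p)]`: that segment of `B`
is the parenthesization of `v`'s subtree. -/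
theorem select_open_paren_and_subtree_interval (t : OTree) (v : ℕ)
    (hv2 : 2 ≤ v) (hvn : v ≤ t.size) (p : ℕ)
    (hp0 : (t.bp.take p).count false = v - 2)  -- p is the position of the (v-1)-th 0
    (hpbit : t.bp[p]? = some false) :
    ∃ q, MatchedPair t.bp p q ∧
      ∃ s, t.preorderList[v - 1]? = some s ∧
        (t.bp.drop p).take (q + 1 - p) = false :: (s.bp ++ [true]) := by
  obtain ⟨p₀, s, hpo, hcnt, hget, hbd, hseg⟩ := sub_all t (v - 2) (by omega)
  have hpeq : p = p₀ := pos_unique hp0 hpbit hcnt hget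
  subst hpeq
  have hss1 := size_pos s
  obtain ⟨hsb1, hsb2⟩ := bp_balanced s
  obtain ⟨hs1, hs2, hs3⟩ := bp_count_length s
  set L := 2 * s.size with hL
  have hsegl : (false :: (s.bp ++ [true])).length = L := by simp; omega
  refine ⟨p + L - 1, ⟨by omega, by omega, hpbit, ?_, ?_, ?_⟩, s, ?_, ?_⟩
  · -- closing parenthesis at q
    have e1 : p + L - 1 = p + (L - 1) := by omega
    have e0 : ((t.bp.drop p).take L)[L - 1]? = (t.bp.drop p)[L - 1]? := by
      rw [List.getElem?_take, if_pos (by omega)]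
    rw [e1, ← List.getElem?_drop, ← e0, hseg]
    have e2 : L - 1 = s.bp.length + 1 := by omega
    rw [e2, List.getElem?_cons_succ, List.getElem?_append_right (le_refl _)]
    simp
  · -- depth at q+1 equals depth at p
    have e1 : p + L - 1 + 1 = p + L := by omega
    have hz : parenDepth (false :: (s.bp ++ [true])) L = 0 := by
      unfold parenDepth
      rw [List.take_of_length_le (by simp; omega)]
      simp [List.count_append, hsb2]
    have e2 : parenDepth (t.bp.drop p) L = parenDepth ((t.bp.drop p).take L) L :=
      (pd_take (le_refl L)).symm
    rw [e1, pd_add, e2, hseg, hz, add_zero]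
  · -- strict depth inequality on (p, q]
    intro k hk1 hk2
    have e1 : k = p + (k - p) := by omega
    have hm1 : 1 ≤ k - p := by omega
    have hm2 : k - p ≤ L - 1 := by omega
    have hpos : 0 < parenDepth (false :: (s.bp ++ [true])) (k - p) := by
      have e3 : k - p = (k - p - 1) + 1 := by omega
      unfold parenDepth
      rw [e3, List.take_succ_cons, List.take_append_of_le_length (by omega)]
      have := hsb1 (k - p - 1)
      simp only [List.count_cons, beq_self_eq_true, if_pos, beq_iff_eq,
        Bool.false_eq_true, if_neg, not_false_eq_true, reduceIte]
      push_cast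
      omega
    have e2 : parenDepth (t.bp.drop p) (k - p) =
        parenDepth ((t.bp.drop p).take L) (k - p) := (pd_take (by omega)).symm
    rw [e1, pd_add, e2, hseg]
    omega
  · have e : v - 1 = (v - 2) + 1 := by omega
    rw [e]; exact hpo
  · have e : p + L - 1 + 1 - p = L := by omega
    rw [e]; exact hseg
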